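/- For all u and all q at which both sides are defined, (ε(q,−u)·γ(q,−q,−u) + γ(q,η,−u)·γ(η,−q,−u)) / (g(−u)·γ(q,−q,−u)) = ϑ(u+η)ϑ(u−2η)/(ϑ(u−η)ϑ(u+2η)); in particular the left-hand side is independent of q. -/

import Mathlib

open scoped BigOperators Kronecker TensorProduct
open Complex

noncomputable section

namespace EtauEta

/-- Jacobi's theta function `ϑ(u) = -∑_{j∈ℤ} exp(πi(j+1/2)²τ + 2πi(j+1/2)(u+1/2))`. -/
def th (τ u : ℂ) : ℂ :=
  -∑' j : ℤ, Complex.exp ((Real.pi : ℂ) * Complex.I * ((j : ℂ) + 1/2)^2 * τ +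
      2 * (Real.pi : ℂ) * Complex.I * ((j : ℂ) + 1/2) * (u + 1/2))

variable (τ η : ℂ)

/-- `g(u)`. -/
def gf (u : ℂ) : ℂ := th τ (u - η) * th τ (u - 2*η) / (th τ η * th τ (2*η))

/-- `α(q₁,q₂,u)`. -/
def af (q₁ q₂ u : ℂ) : ℂ := th τ (η - u) * th τ (q₁ + q₂ - u) / (th τ η * th τ (q₁ + q₂))

/-- `β(q₁,q₂,u)`. -/
def bf (q₁ q₂ u : ℂ) : ℂ :=
  th τ (η - u) * th τ u * th τ (q₁ + q₂ - 2*η) / (th τ (-(2*η)) * th τ η * th τ (q₁ + q₂))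

/-- `ε(q,u)`. -/
def ef (q u : ℂ) : ℂ :=
  th τ (η + u) * th τ (2*η - u) / (th τ η * th τ (2*η)) -
    th τ u * th τ (η - u) / (th τ η * th τ (2*η)) *
      (th τ (q + η) * th τ (q - 2*η) / (th τ (q - η) * th τ q) +
       th τ (q - η) * th τ (q + 2*η) / (th τ (q + η) * th τ q))

/-- `γ(q₁,q₂,u)`. -/
def cf (q₁ q₂ u : ℂ) : ℂ :=
  th τ u * th τ (q₁ + q₂ - η - u) * th τ (q₁ - 2*η) * th τ (q₂ + η) /
    (th τ η * th τ (q₁ + q₂ - 2*η) * th τ (q₁ + η) * th τ q₂)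

/-- `δ(q,u)`. -/
def df (q u : ℂ) : ℂ := th τ (u - q) * th τ (u - q + η) / (th τ q * th τ (q - η))

/-- `ω(u) = ϑ(u+η)ϑ(u−2η)/(ϑ(u−η)ϑ(u+2η))`. -/
def om (u : ℂ) : ℂ := th τ (u + η) * th τ (u - 2*η) / (th τ (u - η) * th τ (u + 2*η))

/-- `y(x,u) = γ(x,−x,u)/γ(x,η,u)`. -/
def yf (x u : ℂ) : ℂ := cf τ η x (-x) u / cf τ η x η u

/-- `z(x,u) = g(u)/β(x,η,u)`. -/
def zf (x u : ℂ) : ℂ := gf τ η u / bf τ η x η u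

/-- Genericity of `η`: `ϑ` does not vanish at nonzero integer multiples of `η`. -/
def genEta : Prop := ∀ m : ℤ, m ≠ 0 → th τ ((m : ℂ) * η) ≠ 0

/-- Genericity of a parameter `x`: `ϑ` does not vanish on `±x + ℤη`
(this makes all the denominators involving `x` nonzero). -/
def genAt (x : ℂ) : Prop :=
  ∀ m : ℤ, th τ (x + (m : ℂ) * η) ≠ 0 ∧ th τ (-x + (m : ℂ) * η) ≠ 0


/-! ### Auxiliary machinery: product splitting and the Weierstrass three-term identity -/

/-- Generic theta-like series term. -/
def thTerm (t c z : ℂ) (j : ℤ) : ℂ :=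
  Complex.exp ((Real.pi : ℂ) * Complex.I * t * ((j : ℂ) + c)^2 +
    2 * (Real.pi : ℂ) * Complex.I * ((j : ℂ) + c) * z)

lemma thTerm_eq_jacobi (t c z : ℂ) (j : ℤ) :
    thTerm t c z j = Complex.exp ((Real.pi : ℂ) * Complex.I * t * c^2 +
      2 * (Real.pi : ℂ) * Complex.I * c * z) * jacobiTheta₂_term j (z + c*t) t := by
  rw [thTerm, jacobiTheta₂_term, ← Complex.exp_add]
  congr 1
  push_cast
  ring

lemma summable_norm_thTerm {t : ℂ} (ht : 0 < t.im) (c z : ℂ) :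
    Summable (fun j : ℤ => ‖thTerm t c z j‖) := by
  have h0 : Summable (fun n : ℤ => ‖jacobiTheta₂_term n (z + c*t) t‖) := by
    apply Summable.of_nonneg_of_le (fun _ => norm_nonneg _)
      (fun n => norm_jacobiTheta₂_term_le ht (le_refl |(z + c*t).im|) (le_refl t.im) n)
    simpa only [pow_zero, one_mul] using
      summable_pow_mul_jacobiTheta₂_term_bound |(z + c*t).im| ht 0
  simp only [thTerm_eq_jacobi, norm_mul]
  exact h0.mul_left _

lemma summable_thTerm {t : ℂ} (ht : 0 < t.im) (c z : ℂ) :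
    Summable (fun j : ℤ => thTerm t c z j) :=
  (summable_norm_thTerm ht c z).of_norm

lemma th_eq_tsum (t x : ℂ) : th t x = -∑' j : ℤ, thTerm t (1/2) (x + 1/2) j := by
  rw [th]
  congr 1
  refine tsum_congr fun j => ?_
  rw [thTerm]
  congr 1
  ring

/-- Even-index auxiliary theta series (with nome `2t`). -/
def BB (t v : ℂ) : ℂ := ∑' j : ℤ, thTerm (2*t) 0 v j

/-- Odd-index auxiliary theta series (with nome `2t`). -/
def AA (t v : ℂ) : ℂ := ∑' j : ℤ, thTerm (2*t) (1/2) v j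

lemma im_two_mul {t : ℂ} (ht : 0 < t.im) : 0 < (2*t).im := by
  have : (2*t).im = 2 * t.im := by simp [Complex.mul_im]
  rw [this]; linarith

/-- The even/odd splitting equivalences of `ℤ × ℤ`. -/
def evenEquiv : (ℤ × ℤ) ≃ {p : ℤ × ℤ // Even (p.1 - p.2)} :=
  Equiv.ofBijective (fun p => ⟨(p.1 + p.2, p.1 - p.2), ⟨p.2, by ring⟩⟩) (by
    constructor
    · rintro ⟨a, d⟩ ⟨a', d'⟩ h
      simp only [Subtype.mk.injEq, Prod.mk.injEq, Subtype.ext_iff] at h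
      obtain ⟨h1, h2⟩ := h
      have : a = a' := by omega
      have : d = d' := by omega
      simp_all
    · rintro ⟨⟨j, k⟩, ⟨d, hd⟩⟩
      refine ⟨(k + d, d), ?_⟩
      simp only [Subtype.mk.injEq, Prod.mk.injEq, Subtype.ext_iff]
      omega)

def oddEquiv : (ℤ × ℤ) ≃ {p : ℤ × ℤ // ¬ Even (p.1 - p.2)} :=
  Equiv.ofBijective (fun p => ⟨(p.1 + p.2, p.1 - p.2 - 1),
      by rw [Int.not_even_iff_odd]; exact ⟨p.2, by ring⟩⟩) (by
    constructor
    · rintro ⟨a, d⟩ ⟨a', d'⟩ h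
      simp only [Subtype.mk.injEq, Prod.mk.injEq] at h
      obtain ⟨h1, h2⟩ := h
      have : a = a' := by omega
      have : d = d' := by omega
      simp_all
    · rintro ⟨⟨j, k⟩, hjk⟩
      rw [Int.not_even_iff_odd] at hjk
      obtain ⟨d, hd⟩ := hjk
      refine ⟨(k + d + 1, d), ?_⟩
      simp only [Subtype.mk.injEq, Prod.mk.injEq]
      omega)

/-- The fundamental product-splitting identity for the theta function. -/
lemma prod_split {t : ℂ} (ht : 0 < t.im) (s w : ℂ) :
    th t (s + w) * th t (s - w) =
      AA t (2*s + 1) * BB t (2*w) + BB t (2*s + 1) * AA t (2*w) := by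
  have h2t := im_two_mul ht
  have hf := summable_norm_thTerm ht (1/2) (s + w + 1/2)
  have hg := summable_norm_thTerm ht (1/2) (s - w + 1/2)
  rw [th_eq_tsum, th_eq_tsum, neg_mul_neg,
    tsum_mul_tsum_of_summable_norm hf hg]
  set F : ℤ × ℤ → ℂ := fun z =>
    thTerm t (1/2) (s + w + 1/2) z.1 * thTerm t (1/2) (s - w + 1/2) z.2 with hF
  have hsum : Summable F := summable_mul_of_summable_norm hf hg
  have hsplit := Summable.tsum_add_tsum_compl (s := {p : ℤ × ℤ | Even (p.1 - p.2)})
    (hsum.subtype _) (hsum.subtype _)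
  rw [← hsplit]
  congr 1
  · -- even part
    have he := (evenEquiv.tsum_eq (fun p : {p : ℤ × ℤ // Even (p.1 - p.2)} => F p.1)).symm
    rw [show (∑' (x : ↥{p : ℤ × ℤ | Even (p.1 - p.2)}), F ↑x)
        = ∑' (p : {p : ℤ × ℤ // Even (p.1 - p.2)}), F p.1 from rfl, he]
    have : ∀ p : ℤ × ℤ, F (evenEquiv p).1 =
        thTerm (2*t) (1/2) (2*s + 1) p.1 * thTerm (2*t) 0 (2*w) p.2 := by
      rintro ⟨a, d⟩
      show thTerm t (1/2) (s + w + 1/2) (a + d) * thTerm t (1/2) (s - w + 1/2) (a - d) = _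
      rw [thTerm, thTerm, thTerm, thTerm, ← Complex.exp_add, ← Complex.exp_add]
      congr 1
      push_cast
      ring
    rw [tsum_congr this,
      ← tsum_mul_tsum_of_summable_norm (summable_norm_thTerm h2t (1/2) (2*s + 1))
        (summable_norm_thTerm h2t 0 (2*w))]
    rfl
  · -- odd part
    have ho := (oddEquiv.tsum_eq (fun p : {p : ℤ × ℤ // ¬ Even (p.1 - p.2)} => F p.1)).symm
    rw [show (∑' (x : ↥{p : ℤ × ℤ | Even (p.1 - p.2)}ᶜ), F ↑x)
        = ∑' (p : {p : ℤ × ℤ // ¬ Even (p.1 - p.2)}), F p.1 from rfl, ho]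
    have : ∀ p : ℤ × ℤ, F (oddEquiv p).1 =
        thTerm (2*t) 0 (2*s + 1) p.1 * thTerm (2*t) (1/2) (2*w) p.2 := by
      rintro ⟨a, d⟩
      show thTerm t (1/2) (s + w + 1/2) (a + d) * thTerm t (1/2) (s - w + 1/2) (a - d - 1) = _
      rw [thTerm, thTerm, thTerm, thTerm, ← Complex.exp_add, ← Complex.exp_add]
      congr 1
      push_cast
      ring
    rw [tsum_congr this,
      ← tsum_mul_tsum_of_summable_norm (summable_norm_thTerm h2t 0 (2*s + 1))
        (summable_norm_thTerm h2t (1/2) (2*w))]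
    rfl

lemma AA_add_one (t v : ℂ) : AA t (v + 1) = -AA t v := by
  rw [AA, AA, ← tsum_neg]
  refine tsum_congr fun j => ?_
  rw [thTerm, thTerm, show (Real.pi : ℂ) * Complex.I * (2*t) * ((j : ℂ) + 1/2)^2 +
      2 * (Real.pi : ℂ) * Complex.I * ((j : ℂ) + 1/2) * (v + 1)
    = ((Real.pi : ℂ) * Complex.I * (2*t) * ((j : ℂ) + 1/2)^2 +
      2 * (Real.pi : ℂ) * Complex.I * ((j : ℂ) + 1/2) * v) + ((2*j+1 : ℤ) : ℂ) * ((Real.pi : ℂ) * Complex.I)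
      from by push_cast; ring, Complex.exp_add, Complex.exp_int_mul]
  rw [show Complex.exp ((Real.pi : ℂ) * Complex.I) = -1 from by
    simpa using Complex.exp_pi_mul_I]
  rw [Odd.neg_one_zpow ⟨j, by ring⟩]
  ring

lemma BB_add_one (t v : ℂ) : BB t (v + 1) = BB t v := by
  rw [BB, BB]
  refine tsum_congr fun j => ?_
  rw [thTerm, thTerm, show (Real.pi : ℂ) * Complex.I * (2*t) * ((j : ℂ) + 0)^2 +
      2 * (Real.pi : ℂ) * Complex.I * ((j : ℂ) + 0) * (v + 1)
    = ((Real.pi : ℂ) * Complex.I * (2*t) * ((j : ℂ) + 0)^2 +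
      2 * (Real.pi : ℂ) * Complex.I * ((j : ℂ) + 0) * v) + ((2*j : ℤ) : ℂ) * ((Real.pi : ℂ) * Complex.I)
      from by push_cast; ring, Complex.exp_add, Complex.exp_int_mul]
  rw [show Complex.exp ((Real.pi : ℂ) * Complex.I) = -1 from by
    simpa using Complex.exp_pi_mul_I]
  rw [Even.neg_one_zpow ⟨j, by ring⟩]
  ring

/-- The reindexing `j \mapsto -1-j`. -/
def negIndexEquiv : ℤ ≃ ℤ where
  toFun j := -1 - j
  invFun j := -1 - j
  left_inv j := by show -1 - (-1 - j) = j; omega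
  right_inv j := by show -1 - (-1 - j) = j; omega

@[simp] lemma negIndexEquiv_apply (j : ℤ) : negIndexEquiv j = -1 - j := rfl

/-- Oddness of the theta function. -/
lemma th_neg (t x : ℂ) : th t (-x) = -th t x := by
  have h : (∑' j : ℤ, thTerm t (1/2) (-x + 1/2) j)
      = -∑' j : ℤ, thTerm t (1/2) (x + 1/2) j := by
    rw [← tsum_neg, ← negIndexEquiv.tsum_eq (fun j => -thTerm t (1/2) (x + 1/2) j)]
    refine tsum_congr fun j => ?_
    rw [negIndexEquiv_apply]
    have hc : Complex.exp (((-(2*j+1) : ℤ) : ℂ) * ((Real.pi : ℂ) * Complex.I)) = -1 := by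
      rw [Complex.exp_int_mul, show Complex.exp ((Real.pi : ℂ) * Complex.I) = -1 from by
        simpa using Complex.exp_pi_mul_I]
      exact Odd.neg_one_zpow ⟨-(j+1), by ring⟩
    rw [thTerm, thTerm]
    conv_rhs => rw [show (Real.pi : ℂ) * Complex.I * t * (((-1 - j : ℤ) : ℂ) + 1/2)^2 +
        2 * (Real.pi : ℂ) * Complex.I * (((-1 - j : ℤ) : ℂ) + 1/2) * (x + 1/2)
      = ((Real.pi : ℂ) * Complex.I * t * (((j : ℤ) : ℂ) + 1/2)^2 +
        2 * (Real.pi : ℂ) * Complex.I * (((j : ℤ) : ℂ) + 1/2) * (-x + 1/2)) +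
        ((-(2*j+1) : ℤ) : ℂ) * ((Real.pi : ℂ) * Complex.I)
        from by push_cast; ring, Complex.exp_add, hc]
    ring
  rw [th_eq_tsum, th_eq_tsum, h, neg_neg]

/-- Weierstrass's three-term identity. -/
lemma wId {t : ℂ} (ht : 0 < t.im) (x y a b : ℂ) :
    (th t (x+y) * th t (x-y)) * (th t (a+b) * th t (a-b)) =
      (th t (x+a) * th t (x-a)) * (th t (y+b) * th t (y-b)) -
      (th t (x+b) * th t (x-b)) * (th t (y+a) * th t (y-a)) := by
  have e1 := prod_split ht x y
  have e2 := prod_split ht a b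
  have e3 := prod_split ht x a
  have e4 := prod_split ht y b
  have e5 := prod_split ht x b
  have e6 := prod_split ht y a
  rw [e1, e2, e3, e4, e5, e6, AA_add_one t (2*x), AA_add_one t (2*a), AA_add_one t (2*y),
    BB_add_one t (2*x), BB_add_one t (2*a), BB_add_one t (2*y)]
  ring


section Instances

variable {t : ℂ} (ht : 0 < t.im) (e q u : ℂ)

include ht

lemma i1 : th t e * (th t (q+u+e) * (th t (q-e) * th t (u-e))) =
    th t (2*e) * (th t (q+u) * (th t q * th t u)) -
    th t e * (th t (q+u-e) * (th t (q+e) * th t (u+e))) := by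
  have h := wId ht (q+u/2) (u/2+e) (u/2) (u/2-e)
  rw [show q+u/2 + (u/2+e) = q+u+e from by ring,
      show q+u/2 - (u/2+e) = q-e from by ring,
      show u/2 + (u/2-e) = u-e from by ring,
      show u/2 - (u/2-e) = e from by ring,
      show q+u/2 + u/2 = q+u from by ring,
      show q+u/2 - u/2 = q from by ring,
      show u/2+e + (u/2-e) = u from by ring,
      show u/2+e - (u/2-e) = 2*e from by ring,
      show q+u/2 + (u/2-e) = q+u-e from by ring,
      show q+u/2 - (u/2-e) = q+e from by ring,
      show u/2+e + u/2 = u+e from by ring,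
      show u/2+e - u/2 = e from by ring] at h
  linear_combination h

lemma i2 : th t e * (th t u * (th t (q-2*e) * th t (q-u+e)) +
      th t q * (th t (u-2*e) * th t (q-u-e))) =
    th t (2*e) * (th t (u-e) * (th t (q-e) * th t (q-u))) := by
  have h := wId ht (q-(u+e)/2) ((3*e-u)/2) ((u+e)/2) ((u-e)/2)
  rw [show q-(u+e)/2 + (3*e-u)/2 = q-u+e from by ring,
      show q-(u+e)/2 - (3*e-u)/2 = q-2*e from by ring,
      show (u+e)/2 + (u-e)/2 = u from by ring,
      show (u+e)/2 - (u-e)/2 = e from by ring,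
      show q-(u+e)/2 + (u+e)/2 = q from by ring,
      show q-(u+e)/2 - (u+e)/2 = q-u-e from by ring,
      show (3*e-u)/2 + (u-e)/2 = e from by ring,
      show (3*e-u)/2 - (u-e)/2 = -(u-2*e) from by ring,
      show q-(u+e)/2 + (u-e)/2 = q-e from by ring,
      show q-(u+e)/2 - (u-e)/2 = q-u from by ring,
      show (3*e-u)/2 + (u+e)/2 = 2*e from by ring,
      show (3*e-u)/2 - (u+e)/2 = -(u-e) from by ring] at h
  simp only [th_neg] at h
  linear_combination h

lemma i3 : th t e * (th t u * (th t (q+2*e) * th t (q-u-e)) +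
      th t q * (th t (u+2*e) * th t (q-u+e))) =
    th t (2*e) * (th t (u+e) * (th t (q+e) * th t (q-u))) := by
  have h := wId ht (q-(u-e)/2) ((-3*e-u)/2) ((u-e)/2) ((u+e)/2)
  rw [show q-(u-e)/2 + (-3*e-u)/2 = q-u-e from by ring,
      show q-(u-e)/2 - (-3*e-u)/2 = q+2*e from by ring,
      show (u-e)/2 + (u+e)/2 = u from by ring,
      show (u-e)/2 - (u+e)/2 = -e from by ring,
      show q-(u-e)/2 + (u-e)/2 = q from by ring,
      show q-(u-e)/2 - (u-e)/2 = q-u+e from by ring,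
      show (-3*e-u)/2 + (u+e)/2 = -e from by ring,
      show (-3*e-u)/2 - (u+e)/2 = -(u+2*e) from by ring,
      show q-(u-e)/2 + (u+e)/2 = q+e from by ring,
      show q-(u-e)/2 - (u+e)/2 = q-u from by ring,
      show (-3*e-u)/2 + (u-e)/2 = -(2*e) from by ring,
      show (-3*e-u)/2 - (u-e)/2 = -(u+e) from by ring] at h
  simp only [th_neg] at h
  linear_combination -h

lemma i4 : th t (q+e) * th t (u+e) * (th t (q+e) * th t (u-e)) =
    th t u^2 * (th t (q+2*e) * th t q) - th t e^2 * (th t (q+u+e) * th t (q-u+e)) := by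
  have h := wId ht ((q+u+2*e)/2) ((q-u)/2) ((q+u)/2) ((q-u+2*e)/2)
  rw [show (q+u+2*e)/2 + (q-u)/2 = q+e from by ring,
      show (q+u+2*e)/2 - (q-u)/2 = u+e from by ring,
      show (q+u)/2 + (q-u+2*e)/2 = q+e from by ring,
      show (q+u)/2 - (q-u+2*e)/2 = u-e from by ring,
      show (q+u+2*e)/2 + (q+u)/2 = q+u+e from by ring,
      show (q+u+2*e)/2 - (q+u)/2 = e from by ring,
      show (q-u)/2 + (q-u+2*e)/2 = q-u+e from by ring,
      show (q-u)/2 - (q-u+2*e)/2 = -e from by ring,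
      show (q+u+2*e)/2 + (q-u+2*e)/2 = q+2*e from by ring,
      show (q+u+2*e)/2 - (q-u+2*e)/2 = u from by ring,
      show (q-u)/2 + (q+u)/2 = q from by ring,
      show (q-u)/2 - (q+u)/2 = -u from by ring] at h
  simp only [th_neg] at h
  linear_combination h

lemma i5 : th t (q-e) * th t (u+e) * (th t (q-e) * th t (u-e)) =
    th t u^2 * (th t q * th t (q-2*e)) - th t e^2 * (th t (q+u-e) * th t (q-u-e)) := by
  have h := wId ht ((q+u)/2) ((q-u-2*e)/2) ((q+u-2*e)/2) ((q-u)/2)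
  rw [show (q+u)/2 + (q-u-2*e)/2 = q-e from by ring,
      show (q+u)/2 - (q-u-2*e)/2 = u+e from by ring,
      show (q+u-2*e)/2 + (q-u)/2 = q-e from by ring,
      show (q+u-2*e)/2 - (q-u)/2 = u-e from by ring,
      show (q+u)/2 + (q+u-2*e)/2 = q+u-e from by ring,
      show (q+u)/2 - (q+u-2*e)/2 = e from by ring,
      show (q-u-2*e)/2 + (q-u)/2 = q-u-e from by ring,
      show (q-u-2*e)/2 - (q-u)/2 = -e from by ring,
      show (q+u)/2 + (q-u)/2 = q from by ring,
      show (q+u)/2 - (q-u)/2 = u from by ring,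
      show (q-u-2*e)/2 + (q+u-2*e)/2 = q-2*e from by ring,
      show (q-u-2*e)/2 - (q+u-2*e)/2 = -u from by ring] at h
  simp only [th_neg] at h
  linear_combination h

lemma i6 : th t (u+e) * th t (q+e) * (th t (u+e) * th t (q-e)) =
    th t q^2 * (th t (u+2*e) * th t u) + th t e^2 * (th t (q+u+e) * th t (q-u-e)) := by
  have h := wId ht ((q+u+2*e)/2) ((u-q)/2) ((q+u)/2) ((u-q+2*e)/2)
  rw [show (q+u+2*e)/2 + (u-q)/2 = u+e from by ring,
      show (q+u+2*e)/2 - (u-q)/2 = q+e from by ring,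
      show (q+u)/2 + (u-q+2*e)/2 = u+e from by ring,
      show (q+u)/2 - (u-q+2*e)/2 = q-e from by ring,
      show (q+u+2*e)/2 + (q+u)/2 = q+u+e from by ring,
      show (q+u+2*e)/2 - (q+u)/2 = e from by ring,
      show (u-q)/2 + (u-q+2*e)/2 = -(q-u-e) from by ring,
      show (u-q)/2 - (u-q+2*e)/2 = -e from by ring,
      show (q+u+2*e)/2 + (u-q+2*e)/2 = u+2*e from by ring,
      show (q+u+2*e)/2 - (u-q+2*e)/2 = q from by ring,
      show (u-q)/2 + (q+u)/2 = u from by ring,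
      show (u-q)/2 - (q+u)/2 = -q from by ring] at h
  simp only [th_neg] at h
  linear_combination h

lemma i7 : th t (u-e) * th t (q+e) * (th t (u-e) * th t (q-e)) =
    th t q^2 * (th t u * th t (u-2*e)) + th t e^2 * (th t (q+u-e) * th t (q-u+e)) := by
  have h := wId ht ((q+u)/2) ((u-q-2*e)/2) ((q+u-2*e)/2) ((u-q)/2)
  rw [show (q+u)/2 + (u-q-2*e)/2 = u-e from by ring,
      show (q+u)/2 - (u-q-2*e)/2 = q+e from by ring,
      show (q+u-2*e)/2 + (u-q)/2 = u-e from by ring,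
      show (q+u-2*e)/2 - (u-q)/2 = q-e from by ring,
      show (q+u)/2 + (q+u-2*e)/2 = q+u-e from by ring,
      show (q+u)/2 - (q+u-2*e)/2 = e from by ring,
      show (u-q-2*e)/2 + (u-q)/2 = -(q-u+e) from by ring,
      show (u-q-2*e)/2 - (u-q)/2 = -e from by ring,
      show (q+u)/2 + (u-q)/2 = u from by ring,
      show (q+u)/2 - (u-q)/2 = q from by ring,
      show (u-q-2*e)/2 + (q+u-2*e)/2 = u-2*e from by ring,
      show (u-q-2*e)/2 - (q+u-2*e)/2 = -q from by ring] at h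
  simp only [th_neg] at h
  linear_combination h

lemma i8 : th t (2*e)^2 * (th t (q+u) * th t (q-u)) =
    th t u^2 * (th t (q+2*e) * th t (q-2*e)) - th t q^2 * (th t (u+2*e) * th t (u-2*e)) := by
  have h := wId ht ((q+2*e+u)/2) ((q-2*e-u)/2) ((q+2*e-u)/2) ((q-2*e+u)/2)
  rw [show (q+2*e+u)/2 + (q-2*e-u)/2 = q from by ring,
      show (q+2*e+u)/2 - (q-2*e-u)/2 = u+2*e from by ring,
      show (q+2*e-u)/2 + (q-2*e+u)/2 = q from by ring,
      show (q+2*e-u)/2 - (q-2*e+u)/2 = -(u-2*e) from by ring,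
      show (q+2*e+u)/2 + (q+2*e-u)/2 = q+2*e from by ring,
      show (q+2*e+u)/2 - (q+2*e-u)/2 = u from by ring,
      show (q-2*e-u)/2 + (q-2*e+u)/2 = q-2*e from by ring,
      show (q-2*e-u)/2 - (q-2*e+u)/2 = -u from by ring,
      show (q+2*e+u)/2 + (q-2*e+u)/2 = q+u from by ring,
      show (q+2*e+u)/2 - (q-2*e+u)/2 = 2*e from by ring,
      show (q-2*e-u)/2 + (q+2*e-u)/2 = q-u from by ring,
      show (q-2*e-u)/2 - (q+2*e-u)/2 = -(2*e) from by ring] at h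
  simp only [th_neg] at h
  linear_combination -h

lemma i9 : th t e^2 * (th t (q+u) * th t (q-u)) =
    th t u^2 * (th t (q+e) * th t (q-e)) - th t q^2 * (th t (u+e) * th t (u-e)) := by
  have h := wId ht ((q+e+u)/2) ((q-e-u)/2) ((q+e-u)/2) ((q-e+u)/2)
  rw [show (q+e+u)/2 + (q-e-u)/2 = q from by ring,
      show (q+e+u)/2 - (q-e-u)/2 = u+e from by ring,
      show (q+e-u)/2 + (q-e+u)/2 = q from by ring,
      show (q+e-u)/2 - (q-e+u)/2 = -(u-e) from by ring,
      show (q+e+u)/2 + (q+e-u)/2 = q+e from by ring,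
      show (q+e+u)/2 - (q+e-u)/2 = u from by ring,
      show (q-e-u)/2 + (q-e+u)/2 = q-e from by ring,
      show (q-e-u)/2 - (q-e+u)/2 = -u from by ring,
      show (q+e+u)/2 + (q-e+u)/2 = q+u from by ring,
      show (q+e+u)/2 - (q-e+u)/2 = e from by ring,
      show (q-e-u)/2 + (q+e-u)/2 = q-u from by ring,
      show (q-e-u)/2 - (q+e-u)/2 = -e from by ring] at h
  simp only [th_neg] at h
  linear_combination -h

/-- The key cubic identity. -/
lemma key : th t e^2 * ((th t (q+e)^2 * th t (q-2*e) + th t (q-e)^2 * th t (q+2*e)) *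
      (th t (u-e) * th t (u+e) * th t u)) +
    th t (2*e)^2 * (th t q^3 * (th t (u-e) * th t (u+e) * th t u)) =
    th t e^2 * ((th t (u+e)^2 * th t (u-2*e) + th t (u-e)^2 * th t (u+2*e)) *
      (th t (q-e) * th t (q+e) * th t q)) +
    th t (2*e)^2 * (th t u^3 * (th t (q-e) * th t (q+e) * th t q)) := by
  linear_combination (th t e^2 * th t u * th t (q-2*e)) * i4 ht e q u +
    (th t e^2 * th t u * th t (q+2*e)) * i5 ht e q u -
    (th t e^2 * th t q * th t (u-2*e)) * i6 ht e q u -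
    (th t e^2 * th t q * th t (u+2*e)) * i7 ht e q u -
    2 * (th t e^2 * th t q * th t u) * i8 ht e q u +
    (th t (2*e)^2 * th t q * th t u) * i9 ht e q u -
    (th t e^2 * th t (2*e) * th t (q-u)) * i1 ht e q u -
    (th t e^3 * th t (q+u+e)) * i2 ht e q u -
    (th t e^3 * th t (q+u-e)) * i3 ht e q u

end Instances

/-- the function
`ω(q,u) = (ε(q,−u)γ(q,−q,−u) + γ(q,η,−u)γ(η,−q,−u)) / (g(−u)γ(q,−q,−u))`
is independent of `q` and equals `ϑ(u+η)ϑ(u−2η)/(ϑ(u−η)ϑ(u+2η))`. -/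
theorem omega_q_independent (τ η : ℂ) (hτ : 0 < τ.im) (hη : genEta τ η)
    (q u : ℂ) (hq : genAt τ η q) (hu : genAt τ η u) :
    (ef τ η q (-u) * cf τ η q (-q) (-u) + cf τ η q η (-u) * cf τ η η (-q) (-u)) /
        (gf τ η (-u) * cf τ η q (-q) (-u)) =
      th τ (u + η) * th τ (u - 2*η) / (th τ (u - η) * th τ (u + 2*η)) := by
  have hTe : th τ η ≠ 0 := by simpa using hη 1 one_ne_zero
  have hT2e : th τ (2*η) ≠ 0 := by
    have := hη 2 two_ne_zero
    rwa [show ((2:ℤ):ℂ) * η = 2*η from by push_cast; ring] at this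
  have hTq : th τ q ≠ 0 := by
    have := (hq 0).1
    rwa [show q + ((0:ℤ):ℂ) * η = q from by push_cast; ring] at this
  have hTq1 : th τ (q+η) ≠ 0 := by
    have := (hq 1).1
    rwa [show q + ((1:ℤ):ℂ) * η = q+η from by push_cast; ring] at this
  have hTqm1 : th τ (q-η) ≠ 0 := by
    have := (hq (-1)).1
    rwa [show q + ((-1:ℤ):ℂ) * η = q-η from by push_cast; ring] at this
  have hTq2 : th τ (q+2*η) ≠ 0 := by
    have := (hq 2).1
    rwa [show q + ((2:ℤ):ℂ) * η = q+2*η from by push_cast; ring] at this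
  have hTqm2 : th τ (q-2*η) ≠ 0 := by
    have := (hq (-2)).1
    rwa [show q + ((-2:ℤ):ℂ) * η = q-2*η from by push_cast; ring] at this
  have hTu : th τ u ≠ 0 := by
    have := (hu 0).1
    rwa [show u + ((0:ℤ):ℂ) * η = u from by push_cast; ring] at this
  have hTu1 : th τ (u+η) ≠ 0 := by
    have := (hu 1).1
    rwa [show u + ((1:ℤ):ℂ) * η = u+η from by push_cast; ring] at this
  have hTum1 : th τ (u-η) ≠ 0 := by
    have := (hu (-1)).1
    rwa [show u + ((-1:ℤ):ℂ) * η = u-η from by push_cast; ring] at this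
  have hTu2 : th τ (u+2*η) ≠ 0 := by
    have := (hu 2).1
    rwa [show u + ((2:ℤ):ℂ) * η = u+2*η from by push_cast; ring] at this
  have hTum2 : th τ (u-2*η) ≠ 0 := by
    have := (hu (-2)).1
    rwa [show u + ((-2:ℤ):ℂ) * η = u-2*η from by push_cast; ring] at this
  have hkey := key hτ η q u
  have hi9 := i9 hτ η q u
  simp only [ef, cf, gf]
  rw [show η + -u = -(u - η) from by ring,
      show 2*η - -u = u + 2*η from by ring,
      show η - -u = u + η from by ring,
      show q + -q - η - -u = u - η from by ring,
      show q + -q - 2*η = -(2*η) from by ring,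
      show -q + η = -(q - η) from by ring,
      show q + η - η - -u = q + u from by ring,
      show q + η - 2*η = q - η from by ring,
      show η + η = 2*η from by ring,
      show η + -q - η - -u = -(q - u) from by ring,
      show η - 2*η = -η from by ring,
      show η + -q - 2*η = -(q + η) from by ring,
      show -u - η = -(u + η) from by ring,
      show -u - 2*η = -(u + 2*η) from by ring]
  simp only [th_neg]
  field_simp
  have hB1 : th τ η * th τ (2 * η) * (th τ η * th τ (2 * η) *
      (th τ (q - η) * th τ q * (th τ (q + η) * th τ q))) *
      (th τ η * th τ (2 * η) * th τ (q + η) * th τ q) ≠ 0 := by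
    simp [hTe, hT2e, hTq, hTq1, hTqm1]
  have hB2 : th τ η * th τ (q - η) * th τ (q + η) * th τ η *
      (th τ η * th τ (q + η) * th τ (2 * η) * th τ q) ≠ 0 := by
    simp [hTe, hT2e, hTq, hTq1, hTqm1]
  have hB3 : th τ (u + η) * th τ (u + 2 * η) *
      (th τ u * th τ (u - η) * th τ (q - 2 * η) * th τ (q - η)) ≠ 0 := by
    simp [hTu1, hTu2, hTu, hTum1, hTqm2, hTqm1]
  rw [mul_comm η 2]
  rw [div_eq_div_iff (mul_ne_zero (mul_ne_zero hTu2 hT2e) hTqm2) hTu2]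
  apply mul_left_cancel₀ (pow_ne_zero 2 hTe)
  linear_combination (th τ (2*η) * th τ (q-2*η) * th τ (u+2*η)) * hkey -
    (th τ (2*η)^3 * th τ (q-2*η) * th τ (u+2*η) * th τ u * th τ q) * hi9

end EtauEta
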